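/- The graph P_{k,n}, obtained from a path on n ≥ 2 vertices by replacing each edge with k parallel edges, is k-edge-connected but does not contain K_3 as a strong immersion when n ≥ 4. -/

import Mathlib

/-- A finite multigraph without loops: a vertex type, an edge type, and an
endpoint map assigning to each edge an unordered pair of distinct vertices. -/
structure Multigraph where
  V : Type
  E : Type
  [finV : Finite V]
  [finE : Finite E]
  ends : E → Sym2 V
  no_loops : ∀ e, ¬ (ends e).IsDiag

attribute [instance] Multigraph.finV Multigraph.finE

namespace Multigraph

variable (G : Multigraph)

/-- The set of edges with exactly one endpoint in `X`. -/
def edgeBoundary (X : Set G.V) : Set G.E :=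
  {e | ∃ u v, G.ends e = s(u, v) ∧ u ∈ X ∧ v ∉ X}

/-- The degree of a vertex: the number of edges incident with it. -/
noncomputable def degree (v : G.V) : ℕ := {e | v ∈ G.ends e}.ncard

/-- Two vertices are adjacent if some edge joins them. -/
def Adj (u v : G.V) : Prop := ∃ e, G.ends e = s(u, v)

/-- Walks in a multigraph. -/
inductive Walk : G.V → G.V → Type
  | nil (v : G.V) : Walk v v
  | cons {u v w : G.V} (e : G.E) (h : G.ends e = s(u, v)) (p : Walk v w) : Walk u w

variable {G}

/-- The list of edges of a walk. -/
def Walk.edges : ∀ {u v : G.V}, G.Walk u v → List G.E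
  | _, _, .nil _ => []
  | _, _, .cons e _ p => e :: p.edges

/-- The list of vertices of a walk, from the first to the last. -/
def Walk.support : ∀ {u v : G.V}, G.Walk u v → List G.V
  | _, v, .nil _ => [v]
  | u, _, .cons _ _ p => u :: p.support

/-- A walk is a path if it repeats no vertex. -/
def Walk.IsPath {u v : G.V} (p : G.Walk u v) : Prop := p.support.Nodup

/-- The internal vertices of a walk (all vertices except the two endpoints). -/
def Walk.internals {u v : G.V} (p : G.Walk u v) : List G.V := p.support.tail.dropLast

/-- The walk avoids the edge set `F`. -/
def Walk.avoids {u v : G.V} (p : G.Walk u v) (F : Set G.E) : Prop := ∀ e ∈ p.edges, e ∉ F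

variable (G)

/-- Any two vertices can be joined by a walk avoiding the edge set `F`. -/
def ConnectedAvoiding (F : Set G.E) : Prop :=
  ∀ u v : G.V, ∃ p : G.Walk u v, p.avoids F

/-- A multigraph is connected if any two vertices are joined by a walk. -/
def Connected : Prop := G.ConnectedAvoiding ∅

/-- A multigraph is `k`-edge-connected if it has at least two vertices and
deleting any fewer than `k` edges leaves it connected. -/
def EdgeConnected (k : ℕ) : Prop :=
  Nontrivial G.V ∧ ∀ F : Set G.E, F.ncard < k → G.ConnectedAvoiding F

end Multigraph

open Multigraph

/-- The data of a (weak) immersion of `H` in `G`: an injection of the vertices and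
pairwise edge-disjoint composite paths, one for each edge of `H`. -/
structure ImmersionData (H G : Multigraph) where
  π : H.V → G.V
  inj : Function.Injective π
  pathEnds : H.E → G.V × G.V
  path : ∀ f : H.E, G.Walk (pathEnds f).1 (pathEnds f).2
  ends_eq : ∀ f : H.E, Sym2.map π (H.ends f) = s((pathEnds f).1, (pathEnds f).2)
  isPath : ∀ f, (path f).IsPath
  edge_disj : ∀ f f', f ≠ f' → ∀ e, e ∈ (path f).edges → e ∉ (path f').edges

/-- `G` contains `H` as a (weak) immersion. -/
def Immersion (H G : Multigraph) : Prop := Nonempty (ImmersionData H G)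

/-- An immersion is strong if no branch vertex is an internal vertex of a composite path. -/
def ImmersionData.Strong {H G : Multigraph} (I : ImmersionData H G) : Prop :=
  ∀ f : H.E, ∀ v : H.V, I.π v ∉ (I.path f).internals

/-- `G` contains `H` as a strong immersion. -/
def StrongImmersion (H G : Multigraph) : Prop := ∃ I : ImmersionData H G, I.Strong

/-- `G` contains `H` as a topological minor: an immersion whose composite paths are
internally vertex-disjoint and avoid the branch vertices internally. -/
def TopologicalMinor (H G : Multigraph) : Prop :=
  ∃ I : ImmersionData H G,
    (∀ f v, I.π v ∉ (I.path f).internals) ∧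
    (∀ f f', f ≠ f' → ∀ w, w ∈ (I.path f).internals → w ∉ (I.path f').internals)

/-- The complete multigraph `K t`: one edge for every unordered pair of distinct vertices. -/
def cliqueGraph (t : ℕ) : Multigraph where
  V := Fin t
  E := {p : Sym2 (Fin t) // ¬ p.IsDiag}
  ends := Subtype.val
  no_loops := fun e => e.2

/-- The multigraph `S_{k,n}`: vertices `x_1, …, x_n` (`some i`) and `y` (`none`), with
exactly `k` parallel edges between each `x_i` and `y`. -/
def starMulti (k n : ℕ) : Multigraph where
  V := Option (Fin n)
  E := Fin n × Fin k
  ends := fun p => s(some p.1, none)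
  no_loops := fun e h => by simp [Sym2.mk_isDiag_iff] at h

/-- The multigraph `P_{k,n}`: a path on `n` vertices with each edge replaced by `k`
parallel edges. -/
def pathMulti (k n : ℕ) : Multigraph where
  V := Fin n
  E := Fin (n - 1) × Fin k
  ends := fun p => s(⟨p.1.1, by have := p.1.2; omega⟩, ⟨p.1.1 + 1, by have := p.1.2; omega⟩)
  no_loops := fun e h => by simp [Sym2.mk_isDiag_iff, Fin.ext_iff] at h

namespace Multigraph

/-- A subgraph of a multigraph, given by a set of vertices and a set of edges with
both endpoints among those vertices. -/
structure Sub (G : Multigraph) where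
  verts : Set G.V
  edgeSet : Set G.E
  closed : ∀ e ∈ edgeSet, ∀ v ∈ G.ends e, v ∈ verts

/-- `(A, B)` is a separation: `A` and `B` are edge-disjoint subgraphs whose union is `G`. -/
def IsSeparation {G : Multigraph} (A B : G.Sub) : Prop :=
  A.verts ∪ B.verts = Set.univ ∧ A.edgeSet ∪ B.edgeSet = Set.univ ∧ A.edgeSet ∩ B.edgeSet = ∅

/-- The order of a separation `(A, B)`. -/
noncomputable def sepOrder {G : Multigraph} (A B : G.Sub) : ℕ := (A.verts ∩ B.verts).ncard

/-- `𝒯` is a tangle of order `Θ` in `G`. -/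
def IsTangle (G : Multigraph) (𝒯 : Set (G.Sub × G.Sub)) (Θ : ℕ) : Prop :=
  (∀ p ∈ 𝒯, IsSeparation p.1 p.2 ∧ sepOrder p.1 p.2 < Θ) ∧
  (∀ A B : G.Sub, IsSeparation A B → sepOrder A B < Θ → (A, B) ∈ 𝒯 ∨ (B, A) ∈ 𝒯) ∧
  (∀ p₁ ∈ 𝒯, ∀ p₂ ∈ 𝒯, ∀ p₃ ∈ 𝒯,
    ¬ (p₁.1.verts ∪ p₂.1.verts ∪ p₃.1.verts = Set.univ ∧
       p₁.1.edgeSet ∪ p₂.1.edgeSet ∪ p₃.1.edgeSet = Set.univ)) ∧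
  (∀ p ∈ 𝒯, p.1.verts ≠ Set.univ)

/-- The line graph of a multigraph: vertices are the edges of `G`, with an edge of the
line graph for each unordered pair of distinct edges of `G` sharing an endpoint. -/
def lineGraph (G : Multigraph) : Multigraph where
  V := G.E
  E := {p : Sym2 G.E // ¬ p.IsDiag ∧ ∃ e f, p = s(e, f) ∧ ∃ v, v ∈ G.ends e ∧ v ∈ G.ends f}
  ends := Subtype.val
  no_loops := fun e => e.2.1

/-- `G'` (with projection `q` and new vertex `x`) is obtained from `G` by consolidating the
vertex set `X`: delete all edges with both ends in `X` and identify `X` to the vertex `x`. -/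
def IsConsolidation (G : Multigraph) (X : Set G.V) (G' : Multigraph)
    (q : G.V → G'.V) (x : G'.V) : Prop :=
  Function.Surjective q ∧ (∀ a ∈ X, q a = x) ∧ (∀ a ∉ X, q a ≠ x) ∧
  (∀ a b, a ∉ X → b ∉ X → q a = q b → a = b) ∧
  ∃ φ : {e : G.E // ∃ w ∈ G.ends e, w ∉ X} ≃ G'.E,
    ∀ e, G'.ends (φ e) = Sym2.map q (G.ends e.1)

/-- An `X`-spider of order `k` with body `v`: `k` pairwise edge-disjoint paths from
`v ∉ X` to `X`, none of them having an internal vertex in `X`. -/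
def HasSpiderWithBody (G : Multigraph) (X : Set G.V) (k : ℕ) (v : G.V) : Prop :=
  v ∉ X ∧ ∃ (tgt : Fin k → G.V) (P : ∀ i, G.Walk v (tgt i)),
    (∀ i, tgt i ∈ X) ∧ (∀ i, (P i).IsPath) ∧
    (∀ i, ∀ w ∈ (P i).internals, w ∉ X) ∧
    (∀ i j, i ≠ j → ∀ e ∈ (P i).edges, e ∉ (P j).edges)

/-- `G` contains an `X`-spider of order `k`. -/
def HasXSpider (G : Multigraph) (X : Set G.V) (k : ℕ) : Prop :=
  ∃ v, HasSpiderWithBody G X k v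

/-- A model of the complete graph `K t` in `G`: `t` pairwise disjoint nonempty connected
branch sets with an edge of `G` between any two of them. -/
def IsCliqueModel (G : Multigraph) (t : ℕ) (X : Fin t → Set G.V) : Prop :=
  (∀ i, (X i).Nonempty) ∧
  (∀ i j, i ≠ j → Disjoint (X i) (X j)) ∧
  (∀ i, ∀ u ∈ X i, ∀ v ∈ X i, ∃ p : G.Walk u v, ∀ w ∈ p.support, w ∈ X i) ∧
  (∀ i j, i ≠ j → ∃ e, ∃ a ∈ X i, ∃ b ∈ X j, G.ends e = s(a, b))

/-- The canonical separation `(A, B)` of the line graph of `G` associated to a vertex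
set `U ⊆ V(G)`. -/
def IsCanonicalSeparation (G : Multigraph) (U : Set G.V) (A B : G.lineGraph.Sub) : Prop :=
  A.verts = {e : G.E | ∃ w ∈ G.ends e, w ∈ U} ∧
  A.edgeSet = {p : G.lineGraph.E | ∀ q ∈ G.lineGraph.ends p, ∃ w ∈ G.ends q, w ∈ U} ∧
  B.verts = {e : G.E | ∃ w ∈ G.ends e, w ∉ U} ∧
  B.edgeSet = {p : G.lineGraph.E | (∀ q ∈ G.lineGraph.ends p, ∃ w ∈ G.ends q, w ∉ U) ∧
    ¬ (∀ q ∈ G.lineGraph.ends p, q ∈ G.edgeBoundary U)}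

/-- A `k`-star with center `u`: a set of `k` edges all incident with `u`. -/
def IsKStarWithCenter (G : Multigraph) (F : Set G.E) (k : ℕ) (u : G.V) : Prop :=
  F.ncard = k ∧ ∀ e ∈ F, u ∈ G.ends e

/-- A set `F` of vertices of the line graph of `G` is free with respect to a tangle `𝒯`
in the line graph if no separation in `𝒯` of order less than `|F|` has `F` on its small side. -/
def FreeInTangle (G : Multigraph) (𝒯 : Set (G.lineGraph.Sub × G.lineGraph.Sub))
    (F : Set G.E) : Prop :=
  ¬ ∃ p ∈ 𝒯, sepOrder p.1 p.2 < F.ncard ∧ F ⊆ p.1.verts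

end Multigraph



namespace Multigraph

/-- Concatenation of walks. -/
def Walk.append {G : Multigraph} : ∀ {u v w : G.V}, G.Walk u v → G.Walk v w → G.Walk u w
  | _, _, _, .nil _, q => q
  | _, _, _, .cons e h p, q => .cons e h (p.append q)

lemma Walk.edges_append {G : Multigraph} : ∀ {u v w : G.V} (p : G.Walk u v) (q : G.Walk v w),
    (p.append q).edges = p.edges ++ q.edges
  | _, _, _, .nil _, q => rfl
  | _, _, _, .cons e h p, q => by
      simp [Walk.append, Walk.edges, Walk.edges_append p q]

lemma Walk.support_ne_nil {G : Multigraph} : ∀ {u v : G.V} (p : G.Walk u v),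
    p.support ≠ []
  | _, _, .nil _ => by simp [Walk.support]
  | _, _, .cons e h p => by simp [Walk.support]

lemma Walk.mem_dropLast {G : Multigraph} : ∀ {u v : G.V} (p : G.Walk u v) (x : G.V),
    x ∈ p.support → x ≠ v → x ∈ p.support.dropLast
  | _, _, .nil w, x, hx, hxv => by
      simp [Walk.support] at hx; exact absurd hx hxv
  | _, _, .cons e h p, x, hx, hxv => by
      have hc : (Walk.cons e h p).support = _ :: p.support := rfl
      rw [hc, List.dropLast_cons_of_ne_nil p.support_ne_nil]
      rw [hc] at hx
      rcases List.mem_cons.1 hx with h1 | h1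
      · exact h1 ▸ List.mem_cons_self
      · exact List.mem_cons_of_mem _ (p.mem_dropLast x h1 hxv)

lemma Walk.mem_internals {G : Multigraph} : ∀ {u v : G.V} (p : G.Walk u v) (x : G.V),
    x ∈ p.support → x ≠ u → x ≠ v → x ∈ p.internals
  | _, _, .nil w, x, hx, hxu, hxv => by
      simp [Walk.support] at hx; exact absurd hx hxv
  | _, _, .cons e h p, x, hx, hxu, hxv => by
      have hx' : x ∈ p.support := by
        rcases List.mem_cons.1 hx with h1 | h1
        · exact absurd h1 hxu
        · exact h1
      show x ∈ (_ :: p.support).tail.dropLast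
      rw [List.tail_cons]
      exact p.mem_dropLast x hx' hxv

end Multigraph

/-- Endpoints of an edge of `pathMulti`. -/
lemma pathMulti_ends_val {k n : ℕ} {e : (pathMulti k n).E} {u w : Fin n}
    (h : (pathMulti k n).ends e = s(u, w)) :
    w.val = u.val + 1 ∨ u.val = w.val + 1 := by
  have h' : (s(u, w) : Sym2 (Fin n)) = s((⟨e.1.1, by have := e.1.2; omega⟩ : Fin n),
      (⟨e.1.1 + 1, by have := e.1.2; omega⟩ : Fin n)) := h.symm
  rw [Sym2.eq_iff] at h'
  rcases h' with ⟨h1, h2⟩ | ⟨h1, h2⟩ <;>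
    [left; right] <;>
  · have a1 := congrArg Fin.val h1
    have a2 := congrArg Fin.val h2
    simp at a1 a2
    omega

/-- Discrete intermediate value: a walk in `pathMulti` visits every value between
its endpoints. -/
lemma pathMulti_walk_ivt {k n : ℕ} : ∀ {u v : Fin n} (p : (pathMulti k n).Walk u v)
    (m : Fin n), min u.val v.val ≤ m.val → m.val ≤ max u.val v.val → m ∈ p.support
  | _, _, .nil w, m, h1, h2 => by
      have : m = w := Fin.ext (by omega)
      simp [Multigraph.Walk.support, this]
      exact List.mem_singleton.2 rfl
  | u, vend, .cons (v := w) e h p, m, h1, h2 => by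
      by_cases hmu : m = u
      · simp [Multigraph.Walk.support, hmu]
        exact List.mem_cons_self
      · have hne : m.val ≠ u.val := fun hh => hmu (Fin.ext hh)
        have hadj := pathMulti_ends_val h
        have h1' : min w.val vend.val ≤ m.val := by omega
        have h2' : m.val ≤ max w.val vend.val := by omega
        have := pathMulti_walk_ivt p m h1' h2'
        simp only [Multigraph.Walk.support, List.mem_cons]
        right; exact this

/-- In three pairwise distinct naturals indexed by `Fin 3`, one lies strictly between
the other two. -/
lemma exists_middle (f : Fin 3 → ℕ) (hinj : Function.Injective f) :
    ∃ i j l : Fin 3, i ≠ l ∧ f i < f j ∧ f j < f l := by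
  have d01 : f 0 ≠ f 1 := fun h => by exact absurd (hinj h) (by decide)
  have d02 : f 0 ≠ f 2 := fun h => by exact absurd (hinj h) (by decide)
  have d12 : f 1 ≠ f 2 := fun h => by exact absurd (hinj h) (by decide)
  have : (f 0 < f 1 ∧ f 1 < f 2) ∨ (f 2 < f 1 ∧ f 1 < f 0) ∨ (f 1 < f 0 ∧ f 0 < f 2) ∨
      (f 2 < f 0 ∧ f 0 < f 1) ∨ (f 0 < f 2 ∧ f 2 < f 1) ∨ (f 1 < f 2 ∧ f 2 < f 0) := by
    omega
  rcases this with ⟨h1, h2⟩ | ⟨h1, h2⟩ | ⟨h1, h2⟩ | ⟨h1, h2⟩ | ⟨h1, h2⟩ | ⟨h1, h2⟩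
  · exact ⟨0, 1, 2, by decide, h1, h2⟩
  · exact ⟨2, 1, 0, by decide, h1, h2⟩
  · exact ⟨1, 0, 2, by decide, h1, h2⟩
  · exact ⟨2, 0, 1, by decide, h1, h2⟩
  · exact ⟨0, 2, 1, by decide, h1, h2⟩
  · exact ⟨1, 2, 0, by decide, h1, h2⟩


/-- `P_{k,n}` is `k`-edge-connected but, for `n ≥ 4`, contains no strong
immersion of `K_3`. -/
theorem pathMulti_edgeConnected_no_K3 (k n : ℕ) (hn : 2 ≤ n) :
    (pathMulti k n).EdgeConnected k ∧
    (4 ≤ n → ¬ StrongImmersion (cliqueGraph 3) (pathMulti k n)) := by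

  constructor
  · constructor
    · exact ⟨⟨0, by omega⟩, ⟨1, by omega⟩, Fin.ne_of_val_ne (by norm_num)⟩
    · intro F hF
      -- for each position there is a free parallel edge
      have hfree : ∀ i : Fin (n - 1), ∃ j : Fin k, ((i, j) : (pathMulti k n).E) ∉ F := by
        intro i
        by_contra hc
        push_neg at hc
        have hsub : Set.range (fun j : Fin k => ((i, j) : (pathMulti k n).E)) ⊆ F := by
          rintro e ⟨j, rfl⟩; exact hc j
        have hinjr : Function.Injective (fun j : Fin k => ((i, j) : (pathMulti k n).E)) := by
          intro a b hab; simpa using congrArg Prod.snd hab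
        have hcard : (Set.range (fun j : Fin k => ((i, j) : (pathMulti k n).E))).ncard = k := by
          rw [← Nat.card_coe_set_eq, Nat.card_range_of_injective hinjr, Nat.card_eq_fintype_card,
            Fintype.card_fin]
        have : (Set.range (fun j : Fin k => ((i, j) : (pathMulti k n).E))).ncard ≤ F.ncard :=
          Set.ncard_le_ncard hsub (Set.toFinite F)
        omega
      have key : ∀ d : ℕ, ∀ u v : Fin n, v.val = u.val + d →
          (∃ p : (pathMulti k n).Walk u v, p.avoids F) ∧
          (∃ q : (pathMulti k n).Walk v u, q.avoids F) := by
        intro d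
        induction d with
        | zero =>
          intro u v huv
          have : u = v := Fin.ext (by omega)
          subst this
          refine ⟨⟨@Multigraph.Walk.nil (pathMulti k n) u, ?_⟩, ⟨@Multigraph.Walk.nil (pathMulti k n) u, ?_⟩⟩ <;>
            intro e he <;> simp [Multigraph.Walk.edges] at he
        | succ d ih =>
          intro u v huv
          have hv := v.isLt
          have hvd : u.val + d < n := by omega
          set v' : Fin n := ⟨u.val + d, hvd⟩ with hv'
          obtain ⟨⟨p, hp⟩, ⟨q, hq⟩⟩ := ih u v' rfl
          have hi : u.val + d < n - 1 := by omega
          obtain ⟨j, hj⟩ := hfree ⟨u.val + d, hi⟩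
          set e : (pathMulti k n).E := (⟨u.val + d, hi⟩, j) with he
          have hvv : v = ⟨u.val + d + 1, by omega⟩ := by apply Fin.ext; simp; omega
          have hends : (pathMulti k n).ends e = s(v', v) := by rw [hvv]; rfl
          refine ⟨⟨p.append (Multigraph.Walk.cons e hends (@Multigraph.Walk.nil (pathMulti k n) v)), ?_⟩,
            ⟨Multigraph.Walk.cons e (by rw [hends]; exact Sym2.eq_swap) q, ?_⟩⟩
          · intro f hf
            replace hf := (congrArg (f ∈ ·) (Multigraph.Walk.edges_append p _)).mp hf
            rcases List.mem_append.1 hf with h1 | h1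
            · exact hp f h1
            · simp [Multigraph.Walk.edges] at h1; subst h1; exact hj
          · intro f hf
            rcases List.mem_cons.1 hf with h1 | h1
            · subst h1; exact hj
            · exact hq f h1
      intro u v
      rcases le_total u.val v.val with h | h
      · obtain ⟨⟨p, hp⟩, -⟩ := key (v.val - u.val) u v (by omega)
        exact ⟨p, hp⟩
      · obtain ⟨-, ⟨q, hq⟩⟩ := key (u.val - v.val) v u (by omega)
        exact ⟨q, hq⟩
  · rintro hn4 ⟨I, hstrong⟩
    obtain ⟨i, j, l, hil, h1, h2⟩ := exists_middle (fun t => (I.π t).val)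
      (fun a b hab => I.inj (Fin.ext hab))
    set f : (cliqueGraph 3).E := ⟨s(i, l), by simp [Sym2.mk_isDiag_iff, hil]⟩ with hf
    have hends := I.ends_eq f
    rw [show (cliqueGraph 3).ends f = (s(i, l) : Sym2 (cliqueGraph 3).V) from rfl] at hends
    replace hends := (Sym2.map_pair_eq I.π i l).symm.trans hends
    rw [Sym2.eq_iff] at hends
    have hbounds : (min (I.pathEnds f).1.val (I.pathEnds f).2.val ≤ (I.π j).val) ∧
        ((I.π j).val ≤ max (I.pathEnds f).1.val (I.pathEnds f).2.val) ∧
        (I.π j ≠ (I.pathEnds f).1) ∧ (I.π j ≠ (I.pathEnds f).2) := by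
      rcases hends with ⟨ha, hb⟩ | ⟨ha, hb⟩ <;>
      · have a1 := congrArg Fin.val ha
        have a2 := congrArg Fin.val hb
        refine ⟨by omega, by omega, fun hh => ?_, fun hh => ?_⟩ <;>
        · have := congrArg Fin.val hh
          omega
    obtain ⟨hb1, hb2, hb3, hb4⟩ := hbounds
    have hmem := pathMulti_walk_ivt (I.path f) (I.π j) hb1 hb2
    have := (I.path f).mem_internals (I.π j) hmem hb3 hb4
    exact hstrong f j this
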